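/- Let A, B be positive definite n×n complex matrices and ν ∈ (0,1). Then for every nonnegative integer n₀, in the Loewner order, (A + B)/2 ≥ H_ν(A,B) + Σ_{k=0}^{n₀} r_k [ H_{m_k/2^k}(A,B) − 2 H_{(2m_k+1)/2^{k+1}}(A,B) + H_{(m_k+1)/2^k}(A,B) ]. -/

import Mathlib

open scoped ComplexOrder

/-- `r ν k`: the recursively defined coefficients, `r 0 = min {ν, 1-ν}`,
`r k = min {2 r (k-1), 1 - 2 r (k-1)}`. -/
noncomputable def r (ν : ℝ) : ℕ → ℝ
  | 0 => min ν (1 - ν)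
  | k + 1 => min (2 * r ν k) (1 - 2 * r ν k)

/-- `m ν k = ⌊2^k ν⌋`, as a real number. -/
noncomputable def m (ν : ℝ) (k : ℕ) : ℝ := ⌊2 ^ k * ν⌋

variable {d : ℕ}

/-- Real power of a matrix via the functional calculus: for a Hermitian matrix with spectral
decomposition `A = U diag(λᵢ) U*`, `mpow A t = U diag(λᵢ^t) U*` (real powers `Real.rpow` of the
eigenvalues); junk value `A` for non-Hermitian `A`. -/
noncomputable def mpow (A : Matrix (Fin d) (Fin d) ℂ) (t : ℝ) : Matrix (Fin d) (Fin d) ℂ :=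
  if hA : A.IsHermitian then
    (hA.eigenvectorUnitary : Matrix (Fin d) (Fin d) ℂ) *
      Matrix.diagonal (fun i => ((hA.eigenvalues i ^ t : ℝ) : ℂ)) *
      star (hA.eigenvectorUnitary : Matrix (Fin d) (Fin d) ℂ)
  else A

/-- The μ-weighted geometric mean `A♯_μ B = A^{1/2} (A^{-1/2} B A^{-1/2})^μ A^{1/2}`. -/
noncomputable def sharp (A B : Matrix (Fin d) (Fin d) ℂ) (μ : ℝ) : Matrix (Fin d) (Fin d) ℂ :=
  mpow A (1 / 2) * mpow (mpow A (-(1 / 2)) * B * mpow A (-(1 / 2))) μ * mpow A (1 / 2)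


/-- The Heinz mean `H_μ(A,B) = (A♯_μ B + A♯_{1-μ} B)/2`. -/
noncomputable def heinz (A B : Matrix (Fin d) (Fin d) ℂ) (μ : ℝ) : Matrix (Fin d) (Fin d) ℂ :=
  ((1 : ℝ) / 2) • (sharp A B μ + sharp A B (1 - μ))

/-! ### Auxiliary scalar material -/

/-- fractional part of `2^k ν`. -/
noncomputable def frc (ν : ℝ) (k : ℕ) : ℝ := Int.fract ((2:ℝ) ^ k * ν)

lemma m_eq_frc (ν : ℝ) (k : ℕ) : m ν k = (2:ℝ) ^ k * ν - frc ν k :=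
  (Int.self_sub_fract _).symm

lemma frc_nonneg (ν : ℝ) (k : ℕ) : 0 ≤ frc ν k := Int.fract_nonneg _

lemma frc_lt_one (ν : ℝ) (k : ℕ) : frc ν k < 1 := Int.fract_lt_one _

lemma frc_zero {ν : ℝ} (hν : ν ∈ Set.Ioo (0:ℝ) 1) : frc ν 0 = ν := by
  rw [frc, pow_zero, one_mul]
  exact Int.fract_eq_self.mpr ⟨hν.1.le, hν.2⟩

lemma m_zero {ν : ℝ} (hν : ν ∈ Set.Ioo (0:ℝ) 1) : m ν 0 = 0 := by
  rw [m_eq_frc, frc_zero hν, pow_zero, one_mul, sub_self]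

/-- Dichotomy step: relations between level `k` and level `k+1`. -/
lemma step_dichotomy (ν : ℝ) (k : ℕ) :
    (frc ν k < 1/2 ∧ m ν (k+1) = 2 * m ν k ∧ frc ν (k+1) = 2 * frc ν k) ∨
    (1/2 ≤ frc ν k ∧ m ν (k+1) = 2 * m ν k + 1 ∧ frc ν (k+1) = 2 * frc ν k - 1) := by
  have hb := Int.floor_add_fract ((2:ℝ) ^ k * ν)
  have h2 : (2:ℝ) ^ (k+1) * ν = ((2 * ⌊(2:ℝ) ^ k * ν⌋ : ℤ) : ℝ) + 2 * Int.fract ((2:ℝ) ^ k * ν) := by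
    push_cast
    linear_combination -2 * hb
  have hm : m ν (k+1) = ((2 * ⌊(2:ℝ) ^ k * ν⌋ + ⌊2 * Int.fract ((2:ℝ) ^ k * ν)⌋ : ℤ) : ℝ) := by
    rw [m, h2, Int.floor_intCast_add]
  have hf : frc ν (k+1) = Int.fract (2 * Int.fract ((2:ℝ) ^ k * ν)) := by
    rw [frc, h2, Int.fract_intCast_add]
  have h0 : (0:ℝ) ≤ Int.fract ((2:ℝ) ^ k * ν) := Int.fract_nonneg _
  have h1 : Int.fract ((2:ℝ) ^ k * ν) < 1 := Int.fract_lt_one _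
  rcases lt_or_ge (Int.fract ((2:ℝ) ^ k * ν)) (1/2) with h | h
  · left
    have hfl : ⌊2 * Int.fract ((2:ℝ) ^ k * ν)⌋ = 0 :=
      Int.floor_eq_zero_iff.mpr ⟨by linarith, by linarith⟩
    refine ⟨h, ?_, ?_⟩
    · rw [hm, hfl, m]
      push_cast
      ring
    · rw [hf, Int.fract_eq_self.mpr ⟨by linarith, by linarith⟩]
      rfl
  · right
    have hfl : ⌊2 * Int.fract ((2:ℝ) ^ k * ν)⌋ = 1 := by
      rw [Int.floor_eq_iff]
      constructor <;> push_cast <;> linarith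
    have hfr : Int.fract (2 * Int.fract ((2:ℝ) ^ k * ν)) = 2 * Int.fract ((2:ℝ) ^ k * ν) - 1 := by
      rw [show 2 * Int.fract ((2:ℝ) ^ k * ν)
          = (2 * Int.fract ((2:ℝ) ^ k * ν) - 1) + ((1:ℤ):ℝ) by rw [Int.cast_one]; ring,
        Int.fract_add_intCast, Int.fract_eq_self.mpr ⟨by linarith, by linarith⟩]
      push_cast
      ring
    refine ⟨h, ?_, ?_⟩
    · rw [hm, hfl, m]
      push_cast
      ring
    · rw [hf, hfr]
      rfl

lemma r_eq_frc {ν : ℝ} (hν : ν ∈ Set.Ioo (0:ℝ) 1) : ∀ k, r ν k = min (frc ν k) (1 - frc ν k)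
  | 0 => by rw [r, frc_zero hν]
  | (k+1) => by
      rw [r, r_eq_frc hν k]
      rcases step_dichotomy ν k with ⟨h, _, ht⟩ | ⟨h, _, ht⟩
      · rw [show min (frc ν k) (1 - frc ν k) = frc ν k from min_eq_left (by linarith), ht]
      · rw [show min (frc ν k) (1 - frc ν k) = 1 - frc ν k from min_eq_right (by linarith),
          ht, min_comm]
        congr 1 <;> ring

lemma r_nonneg {ν : ℝ} (hν : ν ∈ Set.Ioo (0:ℝ) 1) (k : ℕ) : 0 ≤ r ν k := by
  rw [r_eq_frc hν k]
  have := frc_nonneg ν k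
  have := frc_lt_one ν k
  exact le_min (by linarith) (by linarith)

/-- The single-step chord identity. -/
lemma chord_step (f : ℝ → ℝ) {ν : ℝ} (hν : ν ∈ Set.Ioo (0:ℝ) 1) (k : ℕ) :
    (1 - frc ν k) * f (m ν k / 2 ^ k) + frc ν k * f ((m ν k + 1) / 2 ^ k)
      = r ν k * (f (m ν k / 2 ^ k) - 2 * f ((2 * m ν k + 1) / 2 ^ (k+1))
          + f ((m ν k + 1) / 2 ^ k))
        + ((1 - frc ν (k+1)) * f (m ν (k+1) / 2 ^ (k+1))
            + frc ν (k+1) * f ((m ν (k+1) + 1) / 2 ^ (k+1))) := by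
  have h0 := frc_nonneg ν k
  have h1 := frc_lt_one ν k
  rw [r_eq_frc hν k]
  rcases step_dichotomy ν k with ⟨h, hm, ht⟩ | ⟨h, hm, ht⟩
  · rw [min_eq_left (by linarith), hm, ht,
      show (2 * m ν k) / (2:ℝ) ^ (k+1) = m ν k / 2 ^ k by ring]
    ring
  · rw [min_eq_right (by linarith), hm, ht,
      show (2 * m ν k + 1 + 1) / (2:ℝ) ^ (k+1) = (m ν k + 1) / 2 ^ k by ring]
    ring

/-- The general convexity refinement: dyadic chord decomposition. -/
lemma gen_refinement (f : ℝ → ℝ) (hf : ConvexOn ℝ Set.univ f) {ν : ℝ}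
    (hν : ν ∈ Set.Ioo (0:ℝ) 1) (n₀ : ℕ) :
    f ν + ∑ k ∈ Finset.range (n₀+1), r ν k * (f (m ν k / 2 ^ k)
      - 2 * f ((2 * m ν k + 1) / 2 ^ (k+1)) + f ((m ν k + 1) / 2 ^ k))
      ≤ (1 - ν) * f 0 + ν * f 1 := by
  set F : ℕ → ℝ := fun k => (1 - frc ν k) * f (m ν k / 2 ^ k)
    + frc ν k * f ((m ν k + 1) / 2 ^ k) with hF
  have tel : ∀ n : ℕ, (∑ k ∈ Finset.range n, r ν k * (f (m ν k / 2 ^ k)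
      - 2 * f ((2 * m ν k + 1) / 2 ^ (k+1)) + f ((m ν k + 1) / 2 ^ k))) = F 0 - F n := by
    intro n
    induction n with
    | zero => simp
    | succ n ih =>
        rw [Finset.sum_range_succ, ih]
        have := chord_step f hν n
        simp only [hF] at *
        linarith
  have hF0 : F 0 = (1 - ν) * f 0 + ν * f 1 := by
    simp only [hF, frc_zero hν, m_zero hν, pow_zero]
    norm_num
  have hconv : f ν ≤ F (n₀+1) := by
    set K := n₀ + 1
    have h0 := frc_nonneg ν K
    have h1 := (frc_lt_one ν K).le
    have hx : (1 - frc ν K) • (m ν K / 2 ^ K) + (frc ν K) • ((m ν K + 1) / 2 ^ K) = ν := by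
      have hK : ((2:ℝ) ^ K) ≠ 0 := by positivity
      rw [m_eq_frc, smul_eq_mul, smul_eq_mul]
      field_simp
      ring
    have hcx := hf.2 (Set.mem_univ (m ν K / 2 ^ K)) (Set.mem_univ ((m ν K + 1) / 2 ^ K))
      (show (0:ℝ) ≤ 1 - frc ν K by linarith) h0
      (show (1 - frc ν K) + frc ν K = 1 by ring)
    rw [hx] at hcx
    simpa [smul_eq_mul, hF] using hcx
  rw [tel (n₀+1), hF0]
  linarith

noncomputable def hz (lam x : ℝ) : ℝ := (lam ^ x + lam ^ (1 - x)) / 2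

lemma convexOn_exp_affine (c b : ℝ) : ConvexOn ℝ Set.univ fun x => Real.exp (c * x + b) := by
  refine ⟨convex_univ, fun x _ y _ a a' ha ha' hab => ?_⟩
  have h := convexOn_exp.2 (Set.mem_univ (c * x + b)) (Set.mem_univ (c * y + b)) ha ha' hab
  simp only [smul_eq_mul] at h ⊢
  calc Real.exp (c * (a * x + a' * y) + b)
      = Real.exp (a * (c * x + b) + a' * (c * y + b)) := by
        congr 1
        linear_combination b * hab.symm
    _ ≤ a * Real.exp (c * x + b) + a' * Real.exp (c * y + b) := h

lemma hz_convex {lam : ℝ} (hlam : 0 < lam) : ConvexOn ℝ Set.univ fun x => hz lam x := by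
  have h1 := convexOn_exp_affine (Real.log lam) 0
  have h2 := convexOn_exp_affine (-Real.log lam) (Real.log lam)
  have h3 := (h1.add h2).smul (by norm_num : (0:ℝ) ≤ 1/2)
  have he : (fun x => hz lam x) = fun x => (1/2 : ℝ) •
      (Real.exp (Real.log lam * x + 0) + Real.exp (-Real.log lam * x + Real.log lam)) := by
    funext x
    rw [hz, Real.rpow_def_of_pos hlam, Real.rpow_def_of_pos hlam, smul_eq_mul,
      show Real.log lam * (1 - x) = -Real.log lam * x + Real.log lam by ring,
      show Real.log lam * x + 0 = Real.log lam * x by ring]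
    ring
  rw [he]
  exact h3

lemma scalar_main {lam : ℝ} (hlam : 0 < lam) {ν : ℝ} (hν : ν ∈ Set.Ioo (0:ℝ) 1) (n₀ : ℕ) :
    0 ≤ (1 + lam) / 2 - (hz lam ν + ∑ k ∈ Finset.range (n₀+1), r ν k *
      (hz lam (m ν k / 2 ^ k) - 2 * hz lam ((2 * m ν k + 1) / 2 ^ (k+1))
        + hz lam ((m ν k + 1) / 2 ^ k))) := by
  have h := gen_refinement (fun x => hz lam x) (hz_convex hlam) hν n₀
  have h0 : hz lam 0 = (1 + lam) / 2 := by
    rw [hz, Real.rpow_zero, sub_zero, Real.rpow_one]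
  have h1 : hz lam 1 = (1 + lam) / 2 := by
    rw [hz, Real.rpow_one, sub_self, Real.rpow_zero]
    ring
  rw [h0, h1] at h
  nlinarith [h]

/-! ### Auxiliary matrix material -/

lemma mpow_eq (A : Matrix (Fin d) (Fin d) ℂ) (hA : A.IsHermitian) (t : ℝ) :
    mpow A t = (hA.eigenvectorUnitary : Matrix (Fin d) (Fin d) ℂ) *
      Matrix.diagonal (fun i => ((hA.eigenvalues i ^ t : ℝ) : ℂ)) *
      star (hA.eigenvectorUnitary : Matrix (Fin d) (Fin d) ℂ) := dif_pos hA

lemma mpow_isHermitian {A : Matrix (Fin d) (Fin d) ℂ} (hA : A.IsHermitian) (t : ℝ) :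
    (mpow A t).IsHermitian := by
  rw [mpow_eq A hA t, Matrix.star_eq_conjTranspose]
  apply Matrix.isHermitian_mul_mul_conjTranspose
  have hv : (star fun i => ((hA.eigenvalues i ^ t : ℝ) : ℂ))
      = fun i => ((hA.eigenvalues i ^ t : ℝ) : ℂ) := by
    funext i
    simp [Complex.conj_ofReal]
  rw [Matrix.IsHermitian, Matrix.diagonal_conjTranspose, hv]

lemma mpow_mul {A : Matrix (Fin d) (Fin d) ℂ} (hA : A.PosDef) (s t : ℝ) :
    mpow A s * mpow A t = mpow A (s + t) := by
  have hU : star (hA.1.eigenvectorUnitary : Matrix (Fin d) (Fin d) ℂ) *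
      (hA.1.eigenvectorUnitary : Matrix (Fin d) (Fin d) ℂ) = 1 :=
    Matrix.mem_unitaryGroup_iff'.mp hA.1.eigenvectorUnitary.2
  rw [mpow_eq A hA.1 s, mpow_eq A hA.1 t, mpow_eq A hA.1 (s+t)]
  simp only [Matrix.mul_assoc]
  rw [show star (hA.1.eigenvectorUnitary : Matrix (Fin d) (Fin d) ℂ) *
      ((hA.1.eigenvectorUnitary : Matrix (Fin d) (Fin d) ℂ) *
        (Matrix.diagonal (fun i => ((hA.1.eigenvalues i ^ t : ℝ) : ℂ)) *
          star (hA.1.eigenvectorUnitary : Matrix (Fin d) (Fin d) ℂ)))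
      = Matrix.diagonal (fun i => ((hA.1.eigenvalues i ^ t : ℝ) : ℂ)) *
          star (hA.1.eigenvectorUnitary : Matrix (Fin d) (Fin d) ℂ) from by
    rw [← Matrix.mul_assoc, hU, Matrix.one_mul]]
  rw [← Matrix.mul_assoc (Matrix.diagonal _), Matrix.diagonal_mul_diagonal]
  rw [show (fun i => ((hA.1.eigenvalues i ^ s : ℝ) : ℂ) * ((hA.1.eigenvalues i ^ t : ℝ) : ℂ))
      = fun i => ((hA.1.eigenvalues i ^ (s + t) : ℝ) : ℂ) from funext fun i => by
    rw [← Complex.ofReal_mul, ← Real.rpow_add (hA.eigenvalues_pos i)]]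

lemma mpow_zero {A : Matrix (Fin d) (Fin d) ℂ} (hA : A.IsHermitian) : mpow A 0 = 1 := by
  rw [mpow_eq A hA 0]
  simp only [Real.rpow_zero, Complex.ofReal_one, Matrix.diagonal_one, Matrix.mul_one]
  exact Matrix.mem_unitaryGroup_iff.mp hA.eigenvectorUnitary.2

lemma mpow_one {A : Matrix (Fin d) (Fin d) ℂ} (hA : A.IsHermitian) : mpow A 1 = A := by
  rw [mpow_eq A hA 1]
  simp only [Real.rpow_one]
  conv_rhs => rw [hA.spectral_theorem]
  rfl

lemma posDef_conj {B N : Matrix (Fin d) (Fin d) ℂ} (hB : B.PosDef) (hN : N.IsHermitian)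
    (hNu : IsUnit N) : (N * B * N).PosDef := by
  refine Matrix.PosDef.of_dotProduct_mulVec_pos ?_ ?_
  · have := Matrix.isHermitian_conjTranspose_mul_mul N hB.1
    rwa [hN.eq] at this
  · intro x hx
    have hinj : Function.Injective N.mulVec := Matrix.mulVec_injective_iff_isUnit.mpr hNu
    have hx' : N.mulVec x ≠ 0 := fun h => hx (hinj (by simpa using h))
    have h2 := hB.dotProduct_mulVec_pos hx'
    have he : N * B * N = N.conjTranspose * B * N :=
      congrArg (fun X => X * B * N) hN.eq.symm
    rw [he]
    simpa only [Matrix.star_mulVec, Matrix.dotProduct_mulVec, Matrix.vecMul_vecMul] using h2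

/-- Conjugation-by-`P`-and-`U` of a real diagonal function. -/
noncomputable def Phi (P U : Matrix (Fin d) (Fin d) ℂ) (ev : Fin d → ℝ) (g : ℝ → ℝ) :
    Matrix (Fin d) (Fin d) ℂ :=
  P * (U * Matrix.diagonal (fun i => ((g (ev i) : ℝ) : ℂ)) * star U) * P

lemma Phi_add (P U : Matrix (Fin d) (Fin d) ℂ) (ev : Fin d → ℝ) (g h : ℝ → ℝ) :
    Phi P U ev (fun x => g x + h x) = Phi P U ev g + Phi P U ev h := by
  unfold Phi
  rw [show (Matrix.diagonal (fun i => ((g (ev i) + h (ev i) : ℝ) : ℂ)))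
      = Matrix.diagonal (fun i => ((g (ev i) : ℝ) : ℂ))
        + Matrix.diagonal (fun i => ((h (ev i) : ℝ) : ℂ)) by
    rw [Matrix.diagonal_add]
    exact congrArg Matrix.diagonal (funext fun i => by push_cast; ring)]
  simp only [Matrix.mul_add, Matrix.add_mul]

lemma Phi_sub (P U : Matrix (Fin d) (Fin d) ℂ) (ev : Fin d → ℝ) (g h : ℝ → ℝ) :
    Phi P U ev (fun x => g x - h x) = Phi P U ev g - Phi P U ev h := by
  unfold Phi
  rw [show (Matrix.diagonal (fun i => ((g (ev i) - h (ev i) : ℝ) : ℂ)))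
      = Matrix.diagonal (fun i => ((g (ev i) : ℝ) : ℂ))
        - Matrix.diagonal (fun i => ((h (ev i) : ℝ) : ℂ)) by
    rw [Matrix.diagonal_sub]
    exact congrArg Matrix.diagonal (funext fun i => by push_cast; ring)]
  simp only [Matrix.mul_sub, Matrix.sub_mul]

lemma Phi_smul (P U : Matrix (Fin d) (Fin d) ℂ) (ev : Fin d → ℝ) (c : ℝ) (g : ℝ → ℝ) :
    Phi P U ev (fun x => c * g x) = c • Phi P U ev g := by
  unfold Phi
  rw [show (Matrix.diagonal (fun i => ((c * g (ev i) : ℝ) : ℂ)))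
      = c • Matrix.diagonal (fun i => ((g (ev i) : ℝ) : ℂ)) by
    rw [show (fun i => ((c * g (ev i) : ℝ) : ℂ))
        = c • (fun i => ((g (ev i) : ℝ) : ℂ)) from funext fun i => by
      simp [Pi.smul_apply, Complex.real_smul],
      Matrix.diagonal_smul]]
  simp only [mul_smul_comm, smul_mul_assoc]

lemma Phi_sum (P U : Matrix (Fin d) (Fin d) ℂ) (ev : Fin d → ℝ) (s : Finset ℕ)
    (F : ℕ → ℝ → ℝ) :
    Phi P U ev (fun x => ∑ k ∈ s, F k x) = ∑ k ∈ s, Phi P U ev (F k) := by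
  classical
  induction s using Finset.cons_induction with
  | empty => simp [Phi]
  | cons a s ha ih =>
      simp only [Finset.sum_cons]
      rw [Phi_add, ih]

lemma Phi_posSemidef (P U : Matrix (Fin d) (Fin d) ℂ) (ev : Fin d → ℝ)
    (hP : P.IsHermitian) (g : ℝ → ℝ) (hg : ∀ i, 0 ≤ g (ev i)) :
    (Phi P U ev g).PosSemidef := by
  have hD : (Matrix.diagonal (fun i => ((g (ev i) : ℝ) : ℂ))).PosSemidef :=
    Matrix.posSemidef_diagonal_iff.mpr fun i => by
      exact_mod_cast hg i
  have h1 : (U * Matrix.diagonal (fun i => ((g (ev i) : ℝ) : ℂ)) * star U).PosSemidef := by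
    rw [Matrix.star_eq_conjTranspose]
    exact hD.mul_mul_conjTranspose_same U
  have h2 := h1.conjTranspose_mul_mul_same P
  rw [hP.eq] at h2
  exact h2

lemma matrix_reduction (A B : Matrix (Fin d) (Fin d) ℂ) {P U : Matrix (Fin d) (Fin d) ℂ}
    {ev : Fin d → ℝ} (hP : P.IsHermitian) (hev : ∀ i, 0 < ev i)
    (hhalf : ((1 : ℝ) / 2) • (A + B) = Phi P U ev (fun l => (1 + l) / 2))
    (hheinz : ∀ μ : ℝ, heinz A B μ = Phi P U ev (fun l => hz l μ))
    {ν : ℝ} (hν : ν ∈ Set.Ioo (0 : ℝ) 1) (n₀ : ℕ) :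
    (((1 : ℝ) / 2) • (A + B) -
      (heinz A B ν + ∑ k ∈ Finset.range (n₀ + 1), r ν k •
        (heinz A B (m ν k / 2 ^ k) - (2 : ℝ) • heinz A B ((2 * m ν k + 1) / 2 ^ (k + 1)) +
          heinz A B ((m ν k + 1) / 2 ^ k)))).PosSemidef := by
  have hsum : ∀ k : ℕ, r ν k •
      (heinz A B (m ν k / 2 ^ k) - (2 : ℝ) • heinz A B ((2 * m ν k + 1) / 2 ^ (k + 1)) +
        heinz A B ((m ν k + 1) / 2 ^ k))
      = Phi P U ev (fun x => r ν k * (hz x (m ν k / 2 ^ k)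
          - 2 * hz x ((2 * m ν k + 1) / 2 ^ (k + 1)) + hz x ((m ν k + 1) / 2 ^ k))) := by
    intro k
    rw [hheinz, hheinz, hheinz, ← Phi_smul P U ev 2 (fun x => hz x ((2 * m ν k + 1) / 2 ^ (k + 1))),
      ← Phi_sub, ← Phi_add, ← Phi_smul]
  have hS : (∑ k ∈ Finset.range (n₀ + 1), r ν k •
      (heinz A B (m ν k / 2 ^ k) - (2 : ℝ) • heinz A B ((2 * m ν k + 1) / 2 ^ (k + 1)) +
        heinz A B ((m ν k + 1) / 2 ^ k)))
      = Phi P U ev (fun x => ∑ k ∈ Finset.range (n₀ + 1), r ν k * (hz x (m ν k / 2 ^ k)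
          - 2 * hz x ((2 * m ν k + 1) / 2 ^ (k + 1)) + hz x ((m ν k + 1) / 2 ^ k))) := by
    rw [Phi_sum P U ev (Finset.range (n₀ + 1))
      (fun k x => r ν k * (hz x (m ν k / 2 ^ k)
        - 2 * hz x ((2 * m ν k + 1) / 2 ^ (k + 1)) + hz x ((m ν k + 1) / 2 ^ k)))]
    exact Finset.sum_congr rfl fun k _ => hsum k
  rw [hhalf, hheinz ν, hS, ← Phi_add, ← Phi_sub]
  exact Phi_posSemidef P U ev hP _ fun i => scalar_main (hev i) hν n₀

theorem stmt14 (A B : Matrix (Fin d) (Fin d) ℂ) (hA : A.PosDef) (hB : B.PosDef)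
    (ν : ℝ) (hν : ν ∈ Set.Ioo (0 : ℝ) 1) (n₀ : ℕ) :
    (((1 : ℝ) / 2) • (A + B) -
      (heinz A B ν + ∑ k ∈ Finset.range (n₀ + 1), r ν k •
        (heinz A B (m ν k / 2 ^ k) - (2 : ℝ) • heinz A B ((2 * m ν k + 1) / 2 ^ (k + 1)) +
          heinz A B ((m ν k + 1) / 2 ^ k)))).PosSemidef := by
  have hNH : (mpow A (-(1/2))).IsHermitian := mpow_isHermitian hA.1 _
  have hPH : (mpow A (1/2)).IsHermitian := mpow_isHermitian hA.1 _
  have hPN : mpow A (1/2) * mpow A (-(1/2)) = 1 := by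
    rw [mpow_mul hA, show (1/2 + -(1/2) : ℝ) = 0 by norm_num, mpow_zero hA.1]
  have hNP : mpow A (-(1/2)) * mpow A (1/2) = 1 := by
    rw [mpow_mul hA, show (-(1/2) + 1/2 : ℝ) = 0 by norm_num, mpow_zero hA.1]
  have hNu : IsUnit (mpow A (-(1/2))) := ⟨⟨mpow A (-(1/2)), mpow A (1/2), hNP, hPN⟩, rfl⟩
  have hC : (mpow A (-(1/2)) * B * mpow A (-(1/2))).PosDef := posDef_conj hB hNH hNu
  have hPP : mpow A (1/2) * mpow A (1/2) = A := by
    rw [mpow_mul hA, show (1/2 + 1/2 : ℝ) = 1 by norm_num, mpow_one hA.1]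
  have hUU : (hC.1.eigenvectorUnitary : Matrix (Fin d) (Fin d) ℂ) *
      star (hC.1.eigenvectorUnitary : Matrix (Fin d) (Fin d) ℂ) = 1 :=
    Matrix.mem_unitaryGroup_iff.mp hC.1.eigenvectorUnitary.2
  -- representation of sharp
  have hsharp : ∀ ξ : ℝ, sharp A B ξ = Phi (mpow A (1/2))
      (hC.1.eigenvectorUnitary : Matrix (Fin d) (Fin d) ℂ) hC.1.eigenvalues
      (fun l => l ^ ξ) := by
    intro ξ
    unfold sharp Phi
    rw [mpow_eq _ hC.1 ξ]
  have hheinz : ∀ μ : ℝ, heinz A B μ = Phi (mpow A (1/2))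
      (hC.1.eigenvectorUnitary : Matrix (Fin d) (Fin d) ℂ) hC.1.eigenvalues
      (fun l => hz l μ) := by
    intro μ
    rw [heinz, hsharp μ, hsharp (1-μ),
      ← Phi_add _ _ _ (fun l => l ^ μ) (fun l => l ^ (1-μ)), ← Phi_smul]
    exact congrArg _ (funext fun l => by simp only [hz]; ring)
  have heA : A = Phi (mpow A (1/2))
      (hC.1.eigenvectorUnitary : Matrix (Fin d) (Fin d) ℂ) hC.1.eigenvalues
      (fun _ => 1) := by
    unfold Phi
    simp only [Complex.ofReal_one, Matrix.diagonal_one, Matrix.mul_one]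
    rw [hUU, Matrix.mul_one, hPP]
  have heB : B = Phi (mpow A (1/2))
      (hC.1.eigenvectorUnitary : Matrix (Fin d) (Fin d) ℂ) hC.1.eigenvalues
      (fun l => l) := by
    have hC2 : mpow A (-(1/2)) * B * mpow A (-(1/2))
        = (hC.1.eigenvectorUnitary : Matrix (Fin d) (Fin d) ℂ) *
          Matrix.diagonal (fun i => ((hC.1.eigenvalues i : ℝ) : ℂ)) *
          star (hC.1.eigenvectorUnitary : Matrix (Fin d) (Fin d) ℂ) := by
      conv_lhs => rw [hC.1.spectral_theorem]
      rfl
    unfold Phi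
    rw [← hC2]
    calc B = (mpow A (1/2) * mpow A (-(1/2))) * B * (mpow A (-(1/2)) * mpow A (1/2)) := by
          rw [hPN, hNP, Matrix.one_mul, Matrix.mul_one]
      _ = mpow A (1/2) * (mpow A (-(1/2)) * B * mpow A (-(1/2))) * mpow A (1/2) := by
          simp only [Matrix.mul_assoc]
  have hhalf : ((1 : ℝ) / 2) • (A + B) = Phi (mpow A (1/2))
      (hC.1.eigenvectorUnitary : Matrix (Fin d) (Fin d) ℂ) hC.1.eigenvalues
      (fun l => (1 + l) / 2) := by
    calc ((1 : ℝ) / 2) • (A + B)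
        = ((1 : ℝ) / 2) • (Phi (mpow A (1/2))
            (hC.1.eigenvectorUnitary : Matrix (Fin d) (Fin d) ℂ) hC.1.eigenvalues (fun _ => 1)
          + Phi (mpow A (1/2))
            (hC.1.eigenvectorUnitary : Matrix (Fin d) (Fin d) ℂ) hC.1.eigenvalues (fun l => l)) := by
          rw [← heA, ← heB]
      _ = Phi (mpow A (1/2)) (hC.1.eigenvectorUnitary : Matrix (Fin d) (Fin d) ℂ) hC.1.eigenvalues
            (fun l => (1 + l) / 2) := by
          rw [← Phi_add _ _ _ (fun _ => (1:ℝ)) (fun l => l), ← Phi_smul]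
          exact congrArg _ (funext fun l => by ring)
  exact matrix_reduction A B hPH (fun i => hC.eigenvalues_pos i) hhalf hheinz hν n₀
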